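/- arXiv:2107.04744 — 2 statements merged into one kernel-verified Lean document; each statement's English description precedes it below -/
import Mathlib

section
/- Let (v,u,θ) be a classical solution of the outer pressure problem on [0,1]×[0,T]. Define Y(t) = exp(∫₀ᵗ p(τ) dτ) and B(x,t) = exp(∫₀ˣ (u₀(y) − u(y,t)) dy). Then for every (x,t) ∈ [0,1]×[0,T] one has the representation v(x,t) = (v₀(x)/(B(x,t)·Y(t)))·(1 + (1/v₀(x))·∫₀ᵗ B(x,τ)·θ(x,τ)·Y(τ) dτ). -/
open MeasureTheory Set Filter

/-- The H¹(0,1) norm of a function `f` with (weak) derivative `f'`. -/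
noncomputable def H1norm (f f' : ℝ → ℝ) : ℝ :=
  Real.sqrt (∫ x in (0:ℝ)..1, ((f x) ^ 2 + (f' x) ^ 2))

/-- `p` is C¹ on `[0,∞)` with derivative `p'`, and `p` is positive there. -/
def PressureC1 (p p' : ℝ → ℝ) : Prop :=
  (∀ t ∈ Ici (0:ℝ), HasDerivWithinAt p (p' t) (Ici 0) t) ∧
  ContinuousOn p' (Ici 0) ∧ (∀ t ∈ Ici (0:ℝ), 0 < p t)

/-- Uniform pressure assumptions: `m ≤ p ≤ M` on `[0,∞)` and `∫₀^∞ |p'| ≤ I`. -/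
def UniformPressure (p p' : ℝ → ℝ) (m M I : ℝ) : Prop :=
  (∀ t ∈ Ici (0:ℝ), m ≤ p t ∧ p t ≤ M) ∧
  IntegrableOn (fun t => |p' t|) (Ici 0) ∧ (∫ t in Ici (0:ℝ), |p' t|) ≤ I

/-- `(E,δ)`-bounded initial data: the sum of the H¹ norms of `v₀, u₀, θ₀` is at most `E`
and `v₀ ≥ δ`, `θ₀ ≥ δ` on `[0,1]`.  (For a classical solution the spatial derivatives of
the initial data are `vx(·,0)`, `ux(·,0)`, `θx(·,0)`.) -/
def EdeltaBounded (E δ : ℝ) (v0 u0 θ0 : ℝ → ℝ) (vx ux θx : ℝ → ℝ → ℝ) : Prop :=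
  H1norm v0 (fun x => vx x 0) + H1norm u0 (fun x => ux x 0)
      + H1norm θ0 (fun x => θx x 0) ≤ E ∧
  (∀ x ∈ Icc (0:ℝ) 1, δ ≤ v0 x) ∧ (∀ x ∈ Icc (0:ℝ) 1, δ ≤ θ0 x)

/-- A classical solution `(v,u,θ)` of the outer pressure problem for the 1-D compressible
Navier–Stokes system on `[0,1] × Tset` (with `Tset = Icc 0 T` or `Tset = Ici 0`),
with heat conductivity `θ^β`, pressure boundary data `p`, and initial data `(v₀,u₀,θ₀)`.
The functions `vx, vt, ux, ut, uxx, θx, θt, θxx` are the corresponding partial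
derivatives. -/
structure OPSol (β : ℝ) (Tset : Set ℝ) (p v0 u0 θ0 : ℝ → ℝ)
    (v u θ vx vt ux ut uxx θx θt θxx : ℝ → ℝ → ℝ) : Prop where
  v_pos : ∀ x ∈ Icc (0:ℝ) 1, ∀ t ∈ Tset, 0 < v x t
  θ_pos : ∀ x ∈ Icc (0:ℝ) 1, ∀ t ∈ Tset, 0 < θ x t
  cont_v : ContinuousOn (fun q : ℝ × ℝ => v q.1 q.2) (Icc 0 1 ×ˢ Tset)
  cont_u : ContinuousOn (fun q : ℝ × ℝ => u q.1 q.2) (Icc 0 1 ×ˢ Tset)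
  cont_θ : ContinuousOn (fun q : ℝ × ℝ => θ q.1 q.2) (Icc 0 1 ×ˢ Tset)
  cont_vx : ContinuousOn (fun q : ℝ × ℝ => vx q.1 q.2) (Icc 0 1 ×ˢ Tset)
  cont_vt : ContinuousOn (fun q : ℝ × ℝ => vt q.1 q.2) (Icc 0 1 ×ˢ Tset)
  cont_ux : ContinuousOn (fun q : ℝ × ℝ => ux q.1 q.2) (Icc 0 1 ×ˢ Tset)
  cont_ut : ContinuousOn (fun q : ℝ × ℝ => ut q.1 q.2) (Icc 0 1 ×ˢ Tset)
  cont_uxx : ContinuousOn (fun q : ℝ × ℝ => uxx q.1 q.2) (Icc 0 1 ×ˢ Tset)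
  cont_θx : ContinuousOn (fun q : ℝ × ℝ => θx q.1 q.2) (Icc 0 1 ×ˢ Tset)
  cont_θt : ContinuousOn (fun q : ℝ × ℝ => θt q.1 q.2) (Icc 0 1 ×ˢ Tset)
  cont_θxx : ContinuousOn (fun q : ℝ × ℝ => θxx q.1 q.2) (Icc 0 1 ×ˢ Tset)
  hvx : ∀ t ∈ Tset, ∀ x ∈ Icc (0:ℝ) 1, HasDerivWithinAt (fun y => v y t) (vx x t) (Icc 0 1) x
  hvt : ∀ x ∈ Icc (0:ℝ) 1, ∀ t ∈ Tset, HasDerivWithinAt (fun s => v x s) (vt x t) Tset t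
  hux : ∀ t ∈ Tset, ∀ x ∈ Icc (0:ℝ) 1, HasDerivWithinAt (fun y => u y t) (ux x t) (Icc 0 1) x
  hut : ∀ x ∈ Icc (0:ℝ) 1, ∀ t ∈ Tset, HasDerivWithinAt (fun s => u x s) (ut x t) Tset t
  huxx : ∀ t ∈ Tset, ∀ x ∈ Icc (0:ℝ) 1, HasDerivWithinAt (fun y => ux y t) (uxx x t) (Icc 0 1) x
  hθx : ∀ t ∈ Tset, ∀ x ∈ Icc (0:ℝ) 1, HasDerivWithinAt (fun y => θ y t) (θx x t) (Icc 0 1) x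
  hθt : ∀ x ∈ Icc (0:ℝ) 1, ∀ t ∈ Tset, HasDerivWithinAt (fun s => θ x s) (θt x t) Tset t
  hθxx : ∀ t ∈ Tset, ∀ x ∈ Icc (0:ℝ) 1, HasDerivWithinAt (fun y => θx y t) (θxx x t) (Icc 0 1) x
  /-- (i)  v_t = u_x -/
  eq_mass : ∀ x ∈ Icc (0:ℝ) 1, ∀ t ∈ Tset, vt x t = ux x t
  /-- (ii)  u_t = ((u_x − θ)/v)_x -/
  eq_mom : ∀ t ∈ Tset, ∀ x ∈ Icc (0:ℝ) 1,
    HasDerivWithinAt (fun y => (ux y t - θ y t) / v y t) (ut x t) (Icc 0 1) x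
  /-- (iii)  θ_t + (θ/v) u_x = ((θ^β θ_x)/v)_x + u_x²/v -/
  eq_energy : ∀ t ∈ Tset, ∀ x ∈ Icc (0:ℝ) 1, ∃ q : ℝ,
    HasDerivWithinAt (fun y => θ y t ^ β * θx y t / v y t) q (Icc 0 1) x ∧
    θt x t + θ x t / v x t * ux x t = q + (ux x t) ^ 2 / v x t
  bc_left : ∀ t ∈ Tset, (ux 0 t - θ 0 t) / v 0 t = -p t
  bc_right : ∀ t ∈ Tset, (ux 1 t - θ 1 t) / v 1 t = -p t
  bc_θ_left : ∀ t ∈ Tset, θx 0 t = 0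
  bc_θ_right : ∀ t ∈ Tset, θx 1 t = 0
  init_v : ∀ x ∈ Icc (0:ℝ) 1, v x 0 = v0 x
  init_u : ∀ x ∈ Icc (0:ℝ) 1, u x 0 = u0 x
  init_θ : ∀ x ∈ Icc (0:ℝ) 1, θ x 0 = θ0 x
  v0_pos : ∃ c > 0, ∀ x ∈ Icc (0:ℝ) 1, c ≤ v0 x
  θ0_pos : ∃ c > 0, ∀ x ∈ Icc (0:ℝ) 1, c ≤ θ0 x
  u0_mean : (∫ x in (0:ℝ)..1, u0 x) = 0

section RepAux

/-- FTC-2 on a closed interval, with `HasDerivWithinAt` within the ambient interval. -/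
lemma myFTC {A B t : ℝ} (ht : t ∈ Icc A B) {f f' : ℝ → ℝ}
    (hd : ∀ τ ∈ Icc A B, HasDerivWithinAt f (f' τ) (Icc A B) τ)
    (hc' : ContinuousOn f' (Icc A B)) :
    ∫ τ in A..t, f' τ = f t - f A := by
  have hsub : Icc A t ⊆ Icc A B := Icc_subset_Icc le_rfl ht.2
  apply intervalIntegral.integral_eq_sub_of_hasDeriv_right_of_le ht.1
  · exact fun τ hτ => ((hd τ (hsub hτ)).continuousWithinAt).mono hsub
  · intro τ hτ
    have h1 : τ ∈ Icc A B := hsub (Ioo_subset_Icc_self hτ)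
    exact ((hd τ h1).hasDerivAt
      (Icc_mem_nhds hτ.1 (lt_of_lt_of_le hτ.2 ht.2))).hasDerivWithinAt
  · exact (hc'.mono hsub).intervalIntegrable_of_Icc ht.1

/-- FTC-1 within a closed interval. -/
lemma myFTC1 {A B t : ℝ} (ht : t ∈ Icc A B) {f : ℝ → ℝ}
    (hc : ContinuousOn f (Icc A B)) :
    HasDerivWithinAt (fun s => ∫ τ in A..s, f τ) (f t) (Icc A B) t := by
  haveI : Fact (t ∈ Icc A B) := ⟨ht⟩
  exact intervalIntegral.integral_hasDerivWithinAt_right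
    ((hc.mono (Icc_subset_Icc le_rfl ht.2)).intervalIntegrable_of_Icc ht.1)
    ⟨Icc A B, self_mem_nhdsWithin, hc.aestronglyMeasurable measurableSet_Icc⟩
    (hc t ht)

/-- Continuity of a time-slice of a jointly continuous function. -/
lemma sliceT {F : ℝ → ℝ → ℝ} {T : ℝ}
    (hF : ContinuousOn (fun q : ℝ × ℝ => F q.1 q.2) (Icc 0 1 ×ˢ Icc 0 T))
    {x : ℝ} (hx : x ∈ Icc (0:ℝ) 1) :
    ContinuousOn (fun t => F x t) (Icc 0 T) :=
  hF.comp ((continuous_const.prodMk continuous_id).continuousOn) (fun t ht => ⟨hx, ht⟩)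

/-- Continuity of a space-slice of a jointly continuous function. -/
lemma sliceX {F : ℝ → ℝ → ℝ} {T : ℝ}
    (hF : ContinuousOn (fun q : ℝ × ℝ => F q.1 q.2) (Icc 0 1 ×ˢ Icc 0 T))
    {t : ℝ} (ht : t ∈ Icc (0:ℝ) T) :
    ContinuousOn (fun y => F y t) (Icc 0 1) :=
  hF.comp ((continuous_id.prodMk continuous_const).continuousOn) (fun y hy => ⟨hy, ht⟩)

/-- Fubini for interval integrals of a continuous function on a rectangle. -/
lemma fubini_Icc {x t : ℝ} (hx : 0 ≤ x) (ht : 0 ≤ t) {f : ℝ → ℝ → ℝ}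
    (hf : ContinuousOn (fun q : ℝ × ℝ => f q.1 q.2) (Icc 0 x ×ˢ Icc 0 t)) :
    ∫ y in (0:ℝ)..x, ∫ τ in (0:ℝ)..t, f y τ
      = ∫ τ in (0:ℝ)..t, ∫ y in (0:ℝ)..x, f y τ := by
  have hint : IntegrableOn (fun q : ℝ × ℝ => f q.1 q.2) (Ioc 0 x ×ˢ Ioc 0 t) :=
    (hf.integrableOn_compact (isCompact_Icc.prod isCompact_Icc)).mono_set
      (prod_mono Ioc_subset_Icc_self Ioc_subset_Icc_self)
  have hint2 : Integrable (Function.uncurry f)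
      ((volume.restrict (Ioc (0:ℝ) x)).prod (volume.restrict (Ioc (0:ℝ) t))) := by
    rw [Measure.prod_restrict]
    exact hint
  have hswap := MeasureTheory.integral_integral_swap hint2
  rw [intervalIntegral.integral_of_le hx, intervalIntegral.integral_of_le ht]
  calc ∫ y in Ioc (0:ℝ) x, ∫ τ in (0:ℝ)..t, f y τ
      = ∫ y in Ioc (0:ℝ) x, ∫ τ in Ioc (0:ℝ) t, f y τ := by
        refine setIntegral_congr_fun measurableSet_Ioc fun y _ => ?_
        exact intervalIntegral.integral_of_le ht
    _ = ∫ τ in Ioc (0:ℝ) t, ∫ y in Ioc (0:ℝ) x, f y τ := hswap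
    _ = ∫ τ in Ioc (0:ℝ) t, ∫ y in (0:ℝ)..x, f y τ := by
        refine setIntegral_congr_fun measurableSet_Ioc fun τ _ => ?_
        exact (intervalIntegral.integral_of_le hx).symm

end RepAux

/-- representation formula for the specific volume `v`. -/
theorem representation_of_v
    (β T : ℝ) (hβ : 0 < β) (hT : 0 < T)
    (p p' v0 u0 θ0 : ℝ → ℝ) (v u θ vx vt ux ut uxx θx θt θxx : ℝ → ℝ → ℝ)
    (hp : PressureC1 p p')
    (sol : OPSol β (Icc 0 T) p v0 u0 θ0 v u θ vx vt ux ut uxx θx θt θxx) :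
    ∀ x ∈ Icc (0:ℝ) 1, ∀ t ∈ Icc (0:ℝ) T,
      v x t = v0 x /
          (Real.exp (∫ y in (0:ℝ)..x, (u0 y - u y t)) * Real.exp (∫ τ in (0:ℝ)..t, p τ)) *
        (1 + (1 / v0 x) * ∫ τ in (0:ℝ)..t,
          Real.exp (∫ y in (0:ℝ)..x, (u0 y - u y τ)) * θ x τ *
            Real.exp (∫ s in (0:ℝ)..τ, p s)) := by
  intro x hx t ht
  -- the stress function σ
  set σ : ℝ → ℝ → ℝ := fun y τ => (ux y τ - θ y τ) / v y τ with hσdef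
  have hσcont : ContinuousOn (fun q : ℝ × ℝ => σ q.1 q.2) (Icc 0 1 ×ˢ Icc 0 T) := by
    apply ContinuousOn.div (sol.cont_ux.sub sol.cont_θ) sol.cont_v
    exact fun q hq => (sol.v_pos q.1 hq.1 q.2 hq.2).ne'
  have hpcont : ContinuousOn p (Ici 0) := fun s hs => (hp.1 s hs).continuousWithinAt
  -- Step A
  have keyA : ∀ s ∈ Icc (0:ℝ) T,
      (∫ y in (0:ℝ)..x, (u0 y - u y s)) + (∫ τ in (0:ℝ)..s, p τ)
        = -∫ τ in (0:ℝ)..s, σ x τ := by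
    intro s hs
    have hsubT : Icc (0:ℝ) s ⊆ Icc (0:ℝ) T := Icc_subset_Icc le_rfl hs.2
    have hsubX : Icc (0:ℝ) x ⊆ Icc (0:ℝ) 1 := Icc_subset_Icc le_rfl hx.2
    have h1 : ∀ y ∈ Icc (0:ℝ) 1, ∫ τ in (0:ℝ)..s, ut y τ = u y s - u y 0 :=
      fun y hy => myFTC hs (sol.hut y hy) (sliceT sol.cont_ut hy)
    have h2 : ∀ τ ∈ Icc (0:ℝ) T, ∫ y in (0:ℝ)..x, ut y τ = σ x τ + p τ := by
      intro τ hτ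
      have h := myFTC hx (sol.eq_mom τ hτ) (sliceX sol.cont_ut hτ)
      simp only [hσdef]
      rw [h, sol.bc_left τ hτ]; ring
    have fub : ∫ y in (0:ℝ)..x, ∫ τ in (0:ℝ)..s, ut y τ
        = ∫ τ in (0:ℝ)..s, ∫ y in (0:ℝ)..x, ut y τ :=
      fubini_Icc hx.1 hs.1 (sol.cont_ut.mono (prod_mono hsubX hsubT))
    have hσint : IntervalIntegrable (fun τ => σ x τ) volume 0 s :=
      ((sliceT hσcont hx).mono hsubT).intervalIntegrable_of_Icc hs.1
    have hpint : IntervalIntegrable p volume 0 s :=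
      ((hpcont.mono fun τ hτ => (hτ : τ ∈ Icc (0:ℝ) s).1).intervalIntegrable_of_Icc hs.1)
    have main : ∫ y in (0:ℝ)..x, (u y s - u y 0)
        = (∫ τ in (0:ℝ)..s, σ x τ) + ∫ τ in (0:ℝ)..s, p τ := by
      calc ∫ y in (0:ℝ)..x, (u y s - u y 0)
          = ∫ y in (0:ℝ)..x, ∫ τ in (0:ℝ)..s, ut y τ := by
            refine intervalIntegral.integral_congr fun y hy => ?_
            rw [uIcc_of_le hx.1] at hy
            exact (h1 y (hsubX hy)).symm
        _ = ∫ τ in (0:ℝ)..s, ∫ y in (0:ℝ)..x, ut y τ := fub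
        _ = ∫ τ in (0:ℝ)..s, (σ x τ + p τ) := by
            refine intervalIntegral.integral_congr fun τ hτ => ?_
            rw [uIcc_of_le hs.1] at hτ
            exact h2 τ (hsubT hτ)
        _ = (∫ τ in (0:ℝ)..s, σ x τ) + ∫ τ in (0:ℝ)..s, p τ :=
            intervalIntegral.integral_add hσint hpint
    have e1 : ∫ y in (0:ℝ)..x, (u0 y - u y s)
        = -∫ y in (0:ℝ)..x, (u y s - u y 0) := by
      rw [← intervalIntegral.integral_neg]
      refine intervalIntegral.integral_congr fun y hy => ?_
      rw [uIcc_of_le hx.1] at hy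
      rw [sol.init_u y (hsubX hy)]; ring
    rw [e1, main]; ring
  -- Step B
  set Φ : ℝ → ℝ := fun s => Real.exp (-∫ τ in (0:ℝ)..s, σ x τ) * v x s with hΦdef
  set Ψ : ℝ → ℝ := fun s => Real.exp (-∫ τ in (0:ℝ)..s, σ x τ) * θ x s with hΨdef
  have hΦderiv : ∀ s ∈ Icc (0:ℝ) T, HasDerivWithinAt Φ (Ψ s) (Icc 0 T) s := by
    intro s hs
    have hint : HasDerivWithinAt (fun r => ∫ τ in (0:ℝ)..r, σ x τ) (σ x s) (Icc 0 T) s :=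
      myFTC1 hs (sliceT hσcont hx)
    have hexp := (hint.neg).exp
    have hv : HasDerivWithinAt (fun r => v x r) (vt x s) (Icc 0 T) s := sol.hvt x hx s hs
    have hmul := hexp.mul hv
    have hvt : vt x s = ux x s := sol.eq_mass x hx s hs
    have hvpos : (0:ℝ) < v x s := sol.v_pos x hx s hs
    refine hmul.congr_deriv ?_
    symm
    rw [hΨdef, hvt]
    simp only [hσdef]
    field_simp
    simp only [Pi.neg_apply]
    ring
  have hΨcont : ContinuousOn Ψ (Icc 0 T) := by
    have hIcont : ContinuousOn (fun r => ∫ τ in (0:ℝ)..r, σ x τ) (Icc 0 T) :=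
      fun s hs => (myFTC1 hs (sliceT hσcont hx)).continuousWithinAt
    exact ((hIcont.neg.rexp)).mul (sliceT sol.cont_θ hx)
  have hB : ∫ τ in (0:ℝ)..t, Ψ τ = Φ t - Φ 0 := myFTC ht hΦderiv hΨcont
  have hΦ0 : Φ 0 = v0 x := by
    rw [hΦdef]
    simp [intervalIntegral.integral_same, sol.init_v x hx]
  -- rewriting the integrand via Step A
  have intEq : ∫ τ in (0:ℝ)..t, Ψ τ
      = ∫ τ in (0:ℝ)..t, Real.exp (∫ y in (0:ℝ)..x, (u0 y - u y τ)) * θ x τ *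
          Real.exp (∫ s in (0:ℝ)..τ, p s) := by
    refine intervalIntegral.integral_congr fun τ hτ => ?_
    rw [uIcc_of_le ht.1] at hτ
    have hτT : τ ∈ Icc (0:ℝ) T := Icc_subset_Icc le_rfl ht.2 hτ
    have hA := keyA τ hτT
    have hΨτ : Ψ τ = Real.exp (-∫ s in (0:ℝ)..τ, σ x s) * θ x τ := rfl
    have h2 : -∫ s in (0:ℝ)..τ, σ x s
        = (∫ y in (0:ℝ)..x, (u0 y - u y τ)) + ∫ s in (0:ℝ)..τ, p s := hA.symm
    rw [hΨτ, h2, Real.exp_add]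
    ring
  have hAt := keyA t ht
  have hexp_t : Real.exp (-∫ τ in (0:ℝ)..t, σ x τ)
      = Real.exp (∫ y in (0:ℝ)..x, (u0 y - u y t)) * Real.exp (∫ τ in (0:ℝ)..t, p τ) := by
    rw [← Real.exp_add, hAt]
  set E1 := Real.exp (∫ y in (0:ℝ)..x, (u0 y - u y t)) with hE1
  set E2 := Real.exp (∫ τ in (0:ℝ)..t, p τ) with hE2
  set J := ∫ τ in (0:ℝ)..t, Real.exp (∫ y in (0:ℝ)..x, (u0 y - u y τ)) * θ x τ *
      Real.exp (∫ s in (0:ℝ)..τ, p s) with hJ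
  have hmain : E1 * E2 * v x t = v0 x + J := by
    have hΦt : Φ t = E1 * E2 * v x t := by
      have : Φ t = Real.exp (-∫ τ in (0:ℝ)..t, σ x τ) * v x t := rfl
      rw [this, hexp_t]
    have h3 := hB
    rw [intEq, hΦ0, hΦt] at h3
    linarith
  have hv0 : (0:ℝ) < v0 x := by
    have := sol.v_pos x hx 0 ⟨le_rfl, hT.le⟩
    rwa [sol.init_v x hx] at this
  have hE1pos : (0:ℝ) < E1 := Real.exp_pos _
  have hE2pos : (0:ℝ) < E2 := Real.exp_pos _
  have hrhs : v0 x / (E1 * E2) * (1 + 1 / v0 x * J) = (v0 x + J) / (E1 * E2) := by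
    field_simp
  rw [hrhs, eq_div_iff (by positivity)]
  linear_combination hmain
end

section
/- Let β ≥ 0, let θ : [0,1] → (0,∞) be continuously differentiable, let v : [0,1] → (0,∞) be continuous, and set θ̄ = ∫₀¹ θ(x) dx. Then max_{x∈[0,1]} |θ(x)^{(β+1)/2} − θ̄^{(β+1)/2}| ≤ ((β+1)/2) · (∫₀¹ θ(x)^{β−2} θ'(x)² / v(x) dx)^{1/2} · (∫₀¹ θ(x) v(x) dx)^{1/2}. -/
open MeasureTheory Set Filter

/-- Cauchy–Schwarz for continuous nonneg functions on `[0,1]`. -/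
lemma cs_aux (f g : ℝ → ℝ) (hf : ContinuousOn f (Icc 0 1)) (hg : ContinuousOn g (Icc 0 1))
    (hf0 : ∀ x ∈ Icc (0:ℝ) 1, 0 ≤ f x) (hg0 : ∀ x ∈ Icc (0:ℝ) 1, 0 ≤ g x) :
    ∫ x in (0:ℝ)..1, f x * g x ≤
      Real.sqrt (∫ x in (0:ℝ)..1, f x ^ 2) * Real.sqrt (∫ x in (0:ℝ)..1, g x ^ 2) := by
  have h01 : (0:ℝ) ≤ 1 := zero_le_one
  set μ := volume.restrict (Ioc (0:ℝ) 1) with hμ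
  haveI : IsFiniteMeasure μ := by
    constructor
    rw [hμ, Measure.restrict_apply_univ, Real.volume_Ioc]
    simp
  have hsub : Ioc (0:ℝ) 1 ⊆ Icc 0 1 := Ioc_subset_Icc_self
  have memℒp : ∀ (h : ℝ → ℝ), ContinuousOn h (Icc 0 1) → MemLp h (ENNReal.ofReal 2) μ := by
    intro h hc
    obtain ⟨C, hC⟩ := isCompact_Icc.exists_bound_of_continuousOn hc
    refine MemLp.of_bound ((hc.mono hsub).aestronglyMeasurable measurableSet_Ioc) C ?_
    rw [hμ, ae_restrict_iff' measurableSet_Ioc]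
    exact Eventually.of_forall fun x hx => hC x (hsub hx)
  have hfae : 0 ≤ᶠ[ae μ] f := by
    rw [hμ, EventuallyLE, ae_restrict_iff' measurableSet_Ioc]
    exact Eventually.of_forall fun x hx => hf0 x (hsub hx)
  have hgae : 0 ≤ᶠ[ae μ] g := by
    rw [hμ, EventuallyLE, ae_restrict_iff' measurableSet_Ioc]
    exact Eventually.of_forall fun x hx => hg0 x (hsub hx)
  have hpq : Real.HolderConjugate 2 2 := Real.HolderConjugate.two_two
  have key := integral_mul_le_Lp_mul_Lq_of_nonneg hpq hfae hgae (memℒp f hf) (memℒp g hg)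
  have h2 : ∀ (x : ℝ), x ^ (2:ℝ) = x ^ 2 := fun x => by
    rw [← Real.rpow_natCast x 2]; norm_num
  simp only [h2] at key
  rw [intervalIntegral.integral_of_le h01, intervalIntegral.integral_of_le h01,
    intervalIntegral.integral_of_le h01, Real.sqrt_eq_rpow, Real.sqrt_eq_rpow]
  exact key

/-- pointwise oscillation estimate for `θ^{(β+1)/2}`. -/
theorem oscillation_estimate
    (β : ℝ) (hβ : 0 ≤ β) (θ θ' v : ℝ → ℝ)
    (hθpos : ∀ x ∈ Icc (0:ℝ) 1, 0 < θ x)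
    (hθ' : ∀ x ∈ Icc (0:ℝ) 1, HasDerivWithinAt θ (θ' x) (Icc 0 1) x)
    (hθ'c : ContinuousOn θ' (Icc 0 1))
    (hvpos : ∀ x ∈ Icc (0:ℝ) 1, 0 < v x)
    (hvc : ContinuousOn v (Icc 0 1)) :
    ∀ x ∈ Icc (0:ℝ) 1,
      |θ x ^ ((β + 1) / 2) - (∫ y in (0:ℝ)..1, θ y) ^ ((β + 1) / 2)| ≤
        ((β + 1) / 2) * Real.sqrt (∫ y in (0:ℝ)..1, θ y ^ (β - 2) * (θ' y) ^ 2 / v y) *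
          Real.sqrt (∫ y in (0:ℝ)..1, θ y * v y) := by
  intro x hx
  have h01 : (0:ℝ) ≤ 1 := zero_le_one
  have huIcc : uIcc (0:ℝ) 1 = Icc 0 1 := uIcc_of_le h01
  have hθc : ContinuousOn θ (Icc 0 1) := fun y hy => (hθ' y hy).continuousWithinAt
  set θb := ∫ y in (0:ℝ)..1, θ y with hθb
  set e := (β + 1) / 2 with he
  have he0 : 0 ≤ e := by positivity
  -- mean value is attained
  obtain ⟨a, ha, hamin⟩ := isCompact_Icc.exists_isMinOn (nonempty_Icc.2 h01) hθc
  obtain ⟨b, hb, hbmax⟩ := isCompact_Icc.exists_isMaxOn (nonempty_Icc.2 h01) hθc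
  have hθint : IntervalIntegrable θ volume 0 1 :=
    (hθc.mono (by rw [huIcc])).intervalIntegrable
  have hlo : θ a ≤ θb := by
    have := intervalIntegral.integral_mono_on h01 (intervalIntegrable_const) hθint
      (fun y hy => hamin hy)
    simpa using this
  have hhi : θb ≤ θ b := by
    have := intervalIntegral.integral_mono_on h01 hθint (intervalIntegrable_const)
      (fun y hy => hbmax hy)
    simpa using this
  obtain ⟨c, hc, hceq⟩ := isPreconnected_Icc.intermediate_value ha hb hθc ⟨hlo, hhi⟩
  -- derivative of θ^e
  set g : ℝ → ℝ := fun y => θ y ^ e with hg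
  set g' : ℝ → ℝ := fun y => θ' y * e * θ y ^ (e - 1) with hg'
  have hgd : ∀ y ∈ Icc (0:ℝ) 1, HasDerivWithinAt g (g' y) (Icc 0 1) y := fun y hy =>
    (hθ' y hy).rpow_const (Or.inl (hθpos y hy).ne')
  have hgc : ContinuousOn g (Icc 0 1) := fun y hy => (hgd y hy).continuousWithinAt
  have hg'c : ContinuousOn g' (Icc 0 1) := by
    refine (hθ'c.mul continuousOn_const).mul ?_
    exact hθc.rpow_const fun y hy => Or.inl (hθpos y hy).ne'
  -- FTC between any two points of [0,1]
  have ftc : ∀ s ∈ Icc (0:ℝ) 1, ∀ t ∈ Icc (0:ℝ) 1, s ≤ t →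
      g t - g s = ∫ y in s..t, g' y := by
    intro s hs t ht hst
    have hIcc : Icc s t ⊆ Icc 0 1 := Icc_subset_Icc hs.1 ht.2
    refine (intervalIntegral.integral_eq_sub_of_hasDeriv_right_of_le hst
      (hgc.mono hIcc) (fun y hy => ?_) ?_).symm
    · have hy' : y ∈ Ioo (0:ℝ) 1 := ⟨lt_of_le_of_lt hs.1 hy.1, lt_of_lt_of_le hy.2 ht.2⟩
      have : HasDerivAt g (g' y) y :=
        (hgd y (Ioo_subset_Icc_self hy')).hasDerivAt (Icc_mem_nhds hy'.1 hy'.2)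
      exact this.hasDerivWithinAt
    · exact (hg'c.mono (fun z hz => hIcc (by rwa [uIcc_of_le hst] at hz))).intervalIntegrable
  -- bound |g x - g c| by ∫₀¹ |g'|
  have habs : |g x - g c| ≤ ∫ y in (0:ℝ)..1, |g' y| := by
    have h0 : 0 ≤ᶠ[ae (volume.restrict (Ioc (0:ℝ) 1))] fun y => |g' y| :=
      Eventually.of_forall fun y => abs_nonneg _
    have hint : IntervalIntegrable (fun y => |g' y|) volume 0 1 :=
      (hg'c.abs.mono (by rw [huIcc])).intervalIntegrable
    rcases le_total c x with hcx | hxc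
    · rw [ftc c hc x hx hcx]
      calc |∫ y in c..x, g' y| ≤ ∫ y in c..x, |g' y| :=
            intervalIntegral.abs_integral_le_integral_abs hcx
        _ ≤ ∫ y in (0:ℝ)..1, |g' y| :=
            intervalIntegral.integral_mono_interval hc.1 hcx hx.2 h0 hint
    · rw [abs_sub_comm, ftc x hx c hc hxc]
      calc |∫ y in x..c, g' y| ≤ ∫ y in x..c, |g' y| :=
            intervalIntegral.abs_integral_le_integral_abs hxc
        _ ≤ ∫ y in (0:ℝ)..1, |g' y| :=
            intervalIntegral.integral_mono_interval hx.1 hxc hc.2 h0 hint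
  -- pointwise identity |g'| = e * F * G
  set F : ℝ → ℝ := fun y => Real.sqrt (θ y ^ (β - 2) * (θ' y) ^ 2 / v y) with hF
  set G : ℝ → ℝ := fun y => Real.sqrt (θ y * v y) with hG
  have hpt : ∀ y ∈ Icc (0:ℝ) 1, |g' y| = e * (F y * G y) := by
    intro y hy
    have hθy := hθpos y hy
    have hvy := hvpos y hy
    have hFG : F y * G y = θ y ^ ((β - 1) / 2) * |θ' y| := by
      rw [hF, hG, ← Real.sqrt_mul (div_nonneg (mul_nonneg (Real.rpow_nonneg hθy.le _)
        (sq_nonneg _)) hvy.le)]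
      have : θ y ^ (β - 2) * (θ' y) ^ 2 / v y * (θ y * v y)
          = θ y ^ (β - 1) * (θ' y) ^ 2 := by
        have h1 : θ y ^ (β - 1) = θ y ^ (β - 2) * θ y := by
          rw [← Real.rpow_add_one hθy.ne' (β - 2)]; ring_nf
        rw [h1]; field_simp
      rw [this, Real.sqrt_mul (Real.rpow_nonneg hθy.le _), Real.sqrt_sq_eq_abs,
        Real.sqrt_eq_rpow, ← Real.rpow_mul hθy.le]
      have hexp : (β - 1) * (1 / 2) = (β - 1) / 2 := by ring
      rw [hexp]
    rw [hg', hFG, abs_mul, abs_mul, abs_of_nonneg he0,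
      abs_of_nonneg (Real.rpow_nonneg hθy.le _)]
    have : e - 1 = (β - 1) / 2 := by rw [he]; ring
    rw [this]; ring
  -- continuity of F, G and integral identities
  have hθrpc : ∀ r : ℝ, ContinuousOn (fun y => θ y ^ r) (Icc 0 1) := fun r =>
    hθc.rpow_const fun y hy => Or.inl (hθpos y hy).ne'
  have hFc : ContinuousOn F (Icc 0 1) :=
    (((hθrpc (β - 2)).mul (hθ'c.pow 2)).div hvc fun y hy => (hvpos y hy).ne').sqrt
  have hGc : ContinuousOn G (Icc 0 1) := (hθc.mul hvc).sqrt
  have hstep : ∫ y in (0:ℝ)..1, |g' y| = e * ∫ y in (0:ℝ)..1, F y * G y := by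
    rw [← intervalIntegral.integral_const_mul]
    refine intervalIntegral.integral_congr fun y hy => ?_
    exact hpt y (by rwa [huIcc] at hy)
  have hF2 : ∫ y in (0:ℝ)..1, (F y) ^ 2 = ∫ y in (0:ℝ)..1, θ y ^ (β - 2) * (θ' y) ^ 2 / v y := by
    refine intervalIntegral.integral_congr fun y hy => ?_
    rw [huIcc] at hy
    exact Real.sq_sqrt (div_nonneg (mul_nonneg (Real.rpow_nonneg (hθpos y hy).le _)
      (sq_nonneg _)) (hvpos y hy).le)
  have hG2 : ∫ y in (0:ℝ)..1, (G y) ^ 2 = ∫ y in (0:ℝ)..1, θ y * v y := by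
    refine intervalIntegral.integral_congr fun y hy => ?_
    rw [huIcc] at hy
    exact Real.sq_sqrt (mul_nonneg (hθpos y hy).le (hvpos y hy).le)
  have hCS := cs_aux F G hFc hGc (fun y _ => Real.sqrt_nonneg _) (fun y _ => Real.sqrt_nonneg _)
  rw [hF2, hG2] at hCS
  have hgc2 : g c = θb ^ e := by show θ c ^ e = θb ^ e; rw [hceq]
  calc |θ x ^ e - θb ^ e| = |g x - g c| := by rw [hgc2]
    _ ≤ ∫ y in (0:ℝ)..1, |g' y| := habs
    _ = e * ∫ y in (0:ℝ)..1, F y * G y := hstep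
    _ ≤ e * (Real.sqrt (∫ y in (0:ℝ)..1, θ y ^ (β - 2) * (θ' y) ^ 2 / v y) *
          Real.sqrt (∫ y in (0:ℝ)..1, θ y * v y)) := by
        exact mul_le_mul_of_nonneg_left hCS he0
    _ = _ := by rw [he]; ring
end
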